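/- For all integers m, n ≥ 0 with m + n odd, and any real κ > 0, w > 0: ∫₀^{2π} ∫₀^{2π} H₀⁽¹⁾((κw/2π)|s - t|) cos(ns/2) cos(mt/2) ds dt = 0. -/
import Mathlib

open Real intervalIntegral

/-- Bessel function of the first kind of order zero, via its power series. -/
noncomputable def besselJ0 (x : ℝ) : ℝ :=
  ∑' k : ℕ, (-1 : ℝ) ^ k * (x / 2) ^ (2 * k) / ((Nat.factorial k : ℝ)) ^ 2

/-- Bessel function of the second kind of order zero, via its series expansion. -/
noncomputable def besselY0 (x : ℝ) : ℝ :=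
  (2 / π) * ((Real.log (x / 2) + Real.eulerMascheroniConstant) * besselJ0 x +
    ∑' k : ℕ, (-1 : ℝ) ^ k * (harmonic (k + 1) : ℝ) * (x ^ 2 / 4) ^ (k + 1) /
      ((Nat.factorial (k + 1) : ℝ)) ^ 2)

/-- Hankel function of the first kind of order zero, `H₀⁽¹⁾ = J₀ + i Y₀`. -/
noncomputable def hankelH0 (x : ℝ) : ℂ :=
  (besselJ0 x : ℂ) + Complex.I * (besselY0 x : ℂ)

lemma cos_refl_half (k : ℕ) (x : ℝ) :
    Real.cos ((k : ℝ) * (2 * π - x) / 2) = (-1) ^ k * Real.cos ((k : ℝ) * x / 2) := by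
  have h : (k : ℝ) * (2 * π - x) / 2 = (k : ℝ) * π - (k : ℝ) * x / 2 := by ring
  rw [h, Real.cos_nat_mul_pi_sub]

theorem stmt_9 (m n : ℕ) (hodd : Odd (m + n))
    (κ w : ℝ) (hκ : 0 < κ) (hw : 0 < w) :
    ∫ t in (0 : ℝ)..(2 * π), ∫ s in (0 : ℝ)..(2 * π),
        hankelH0 ((κ * w / (2 * π)) * |s - t|) *
          (Real.cos (n * s / 2) : ℂ) * (Real.cos (m * t / 2) : ℂ) = 0 := by
  set G : ℝ → ℝ → ℂ := fun s t =>
    hankelH0 ((κ * w / (2 * π)) * |s - t|) *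
      (Real.cos (n * s / 2) : ℂ) * (Real.cos (m * t / 2) : ℂ) with hG
  have hGsym : ∀ s t, G (2 * π - s) (2 * π - t) = - G s t := by
    intro s t
    have habs : |(2 * π - s) - (2 * π - t)| = |s - t| := by
      rw [show (2 * π - s) - (2 * π - t) = t - s by ring, abs_sub_comm]
    have hpow : ((-1 : ℂ)) ^ n * ((-1 : ℂ)) ^ m = -1 := by
      rw [← pow_add]
      exact Odd.neg_one_pow (by rwa [add_comm] at hodd)
    simp only [hG, habs, cos_refl_half]
    simp only [Complex.ofReal_mul, Complex.ofReal_pow, Complex.ofReal_neg, Complex.ofReal_one]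
    calc hankelH0 ((κ * w / (2 * π)) * |s - t|) *
          ((-1 : ℂ) ^ n * (Real.cos ((n : ℝ) * s / 2) : ℂ)) *
          ((-1 : ℂ) ^ m * (Real.cos ((m : ℝ) * t / 2) : ℂ))
        = ((-1 : ℂ) ^ n * (-1 : ℂ) ^ m) *
            (hankelH0 ((κ * w / (2 * π)) * |s - t|) *
              (Real.cos ((n : ℝ) * s / 2) : ℂ) * (Real.cos ((m : ℝ) * t / 2) : ℂ)) := by
          ring
      _ = _ := by rw [hpow]; ring
  have inner : ∀ t, (∫ s in (0 : ℝ)..(2 * π), G (2 * π - s) t)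
      = ∫ s in (0 : ℝ)..(2 * π), G s t := by
    intro t
    have h := intervalIntegral.integral_comp_sub_left (a := 0) (b := 2 * π) (fun s => G s t) (2 * π)
    rw [show 2 * π - 2 * π = 0 by ring, show 2 * π - 0 = 2 * π by ring] at h
    exact h
  have outer : (∫ t in (0 : ℝ)..(2 * π), ∫ s in (0 : ℝ)..(2 * π), G s (2 * π - t))
      = ∫ t in (0 : ℝ)..(2 * π), ∫ s in (0 : ℝ)..(2 * π), G s t := by
    have h := intervalIntegral.integral_comp_sub_left (a := 0) (b := 2 * π)
      (fun t => ∫ s in (0 : ℝ)..(2 * π), G s t) (2 * π)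
    rw [show 2 * π - 2 * π = 0 by ring, show 2 * π - 0 = 2 * π by ring] at h
    exact h
  have hI : (∫ t in (0 : ℝ)..(2 * π), ∫ s in (0 : ℝ)..(2 * π), G s t)
      = - ∫ t in (0 : ℝ)..(2 * π), ∫ s in (0 : ℝ)..(2 * π), G s t := by
    conv_lhs => rw [← outer]
    have : ∀ t, (∫ s in (0 : ℝ)..(2 * π), G s (2 * π - t))
        = - ∫ s in (0 : ℝ)..(2 * π), G s t := by
      intro t
      rw [← inner (2 * π - t)]
      simp only [hGsym]
      rw [intervalIntegral.integral_neg]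
    simp only [this]
    rw [intervalIntegral.integral_neg]
  linear_combination hI / 2
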